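/- Let R be any set of permutations (of arbitrary lengths) and let k ≥ 0. Then for all n ≥ k, |S_n(E^k(R))| = (n!/(n−k)!)·|S_{n−k}(R)|, and for all 0 ≤ n < k, |S_n(E^k(R))| = n!. -/

import Mathlib

/-- `π` contains `σ` as a pattern: there is a subsequence of `π` (in one-line notation)
whose entries are in the same relative order as those of `σ`. -/
def PContains {n k : ℕ} (π : Equiv.Perm (Fin n)) (σ : Equiv.Perm (Fin k)) : Prop :=
  ∃ f : Fin k → Fin n, StrictMono f ∧ ∀ s t : Fin k, π (f s) < π (f t) ↔ σ s < σ t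

/-- `π` avoids the pattern `σ`. -/
def PAvoids {n k : ℕ} (π : Equiv.Perm (Fin n)) (σ : Equiv.Perm (Fin k)) : Prop :=
  ¬ PContains π σ

/-- `β` (a permutation of `{1,…,m+1}`) is an extension of `α` (a permutation of `{1,…,m}`):
deleting the largest entry from the one-line notation of `β` yields the one-line
notation of `α`.  (Zero-indexed: the positions other than `β⁻¹ (Fin.last m)`, taken in
order via `Fin.succAbove`, carry the values of `α`.) -/
def IsExtension {m : ℕ} (β : Equiv.Perm (Fin (m + 1))) (α : Equiv.Perm (Fin m)) : Prop :=
  ∀ i : Fin m, (α i : ℕ) = (β ((β⁻¹ (Fin.last m)).succAbove i) : ℕ)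

/-- The extension `E(R)` of a set `R` of permutations (of arbitrary lengths):
all permutations that are extensions of some element of `R`. -/
def PermExt (R : Set ((n : ℕ) × Equiv.Perm (Fin n))) : Set ((n : ℕ) × Equiv.Perm (Fin n)) :=
  { p | ∃ (m : ℕ) (β : Equiv.Perm (Fin (m + 1))) (α : Equiv.Perm (Fin m)),
      p = ⟨m + 1, β⟩ ∧ (⟨m, α⟩ : (n : ℕ) × Equiv.Perm (Fin n)) ∈ R ∧ IsExtension β α }

/-- `|S_n(R)|`: the number of permutations of `{1,…,n}` avoiding every pattern in the
set `R` of permutations of arbitrary lengths. -/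
noncomputable def SnCard (n : ℕ) (R : Set ((n : ℕ) × Equiv.Perm (Fin n))) : ℕ :=
  Nat.card {π : Equiv.Perm (Fin n) // ∀ σ ∈ R, PAvoids π σ.2}

section Helpers

lemma strictMono_fin_id {m : ℕ} {f : Fin m → Fin m} (hf : StrictMono f) : f = id := by
  have hb : Function.Bijective f := Finite.injective_iff_bijective.mp hf.injective
  have h : Set.range f = Set.range (id : Fin m → Fin m) := by
    rw [Set.range_id, Set.range_eq_univ.mpr hb.2]
  exact (StrictMono.range_inj hf strictMono_id).mp h

lemma perm_eq_of_order {m : ℕ} (σ : Equiv.Perm (Fin m)) {ρ : Fin m → Fin m}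
    (h : ∀ s t, ρ s < ρ t ↔ σ s < σ t) : ρ = σ := by
  have hsm : StrictMono (ρ ∘ σ.symm) := by
    intro a b hab
    have := (h (σ.symm a) (σ.symm b)).mpr (by simpa using hab)
    simpa using this
  have h2 := strictMono_fin_id hsm
  funext i
  have := congrFun h2 (σ i)
  simpa using this


def delMax {n : ℕ} (β : Equiv.Perm (Fin (n + 1))) : Equiv.Perm (Fin n) :=
  Equiv.removeNone ((finSuccEquiv' (β⁻¹ (Fin.last n))).symm.trans (β.trans finSuccEquivLast))

lemma finSuccEquivLast_ne_last {n : ℕ} {x : Fin (n + 1)} (h : x ≠ Fin.last n) :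
    finSuccEquivLast x = some (x.castPred h) := by
  induction x using Fin.lastCases with
  | last => exact absurd rfl h
  | cast i => simp

lemma delMax_castSucc {n : ℕ} (β : Equiv.Perm (Fin (n + 1))) (i : Fin n) :
    Fin.castSucc (delMax β i) = β ((β⁻¹ (Fin.last n)).succAbove i) := by
  set j := β⁻¹ (Fin.last n) with hj
  have hne : β (j.succAbove i) ≠ Fin.last n := by
    intro h
    have h2 : j.succAbove i = j := by
      rw [hj]
      exact (Equiv.eq_symm_apply β).mpr h
    exact Fin.succAbove_ne j i h2
  have hsome : ((finSuccEquiv' j).symm.trans (β.trans finSuccEquivLast)) (some i)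
      = some ((β (j.succAbove i)).castPred hne) := by
    simp only [Equiv.trans_apply, finSuccEquiv'_symm_some]
    exact finSuccEquivLast_ne_last hne
  have := Equiv.removeNone_some _ ⟨_, hsome⟩
  rw [hsome] at this
  have h2 : delMax β i = (β (j.succAbove i)).castPred hne := by
    exact Option.some_injective _ this
  rw [h2]; simp

lemma delMax_val {n : ℕ} (β : Equiv.Perm (Fin (n + 1))) (i : Fin n) :
    (delMax β i : ℕ) = (β ((β⁻¹ (Fin.last n)).succAbove i) : ℕ) := by
  rw [← delMax_castSucc]; simp

lemma isExtension_iff {n : ℕ} (β : Equiv.Perm (Fin (n + 1))) (α : Equiv.Perm (Fin n)) :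
    IsExtension β α ↔ α = delMax β := by
  constructor
  · intro h
    ext i
    have := h i
    rw [← delMax_val] at this
    exact this
  · intro h i
    rw [h]; exact delMax_val β i

def extendPerm {n : ℕ} (j : Fin (n + 1)) (ρ : Equiv.Perm (Fin n)) : Equiv.Perm (Fin (n + 1)) :=
  (finSuccEquiv' j).trans ((ρ.optionCongr).trans finSuccEquivLast.symm)

lemma extendPerm_self {n : ℕ} (j : Fin (n + 1)) (ρ : Equiv.Perm (Fin n)) :
    extendPerm j ρ j = Fin.last n := by
  simp [extendPerm, finSuccEquiv'_at]

lemma extendPerm_succAbove {n : ℕ} (j : Fin (n + 1)) (ρ : Equiv.Perm (Fin n)) (i : Fin n) :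
    extendPerm j ρ (j.succAbove i) = Fin.castSucc (ρ i) := by
  simp [extendPerm, finSuccEquiv'_succAbove]

lemma extendPerm_inv_last {n : ℕ} (j : Fin (n + 1)) (ρ : Equiv.Perm (Fin n)) :
    (extendPerm j ρ)⁻¹ (Fin.last n) = j := by
  rw [← extendPerm_self j ρ]
  exact Equiv.symm_apply_apply _ _

lemma delMax_extendPerm {n : ℕ} (j : Fin (n + 1)) (ρ : Equiv.Perm (Fin n)) :
    delMax (extendPerm j ρ) = ρ := by
  symm
  ext i
  rw [delMax_val, extendPerm_inv_last, extendPerm_succAbove]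
  simp


lemma containsA {n m : ℕ} (π : Equiv.Perm (Fin (n + 1))) (β : Equiv.Perm (Fin (m + 1)))
    (σ : Equiv.Perm (Fin m)) (hext : IsExtension β σ) (h : PContains π β) :
    PContains (delMax π) σ := by
  obtain ⟨f, hf, hord⟩ := h
  set j := π⁻¹ (Fin.last n) with hjdef
  set p := β⁻¹ (Fin.last m) with hpdef
  have hβp : β p = Fin.last m := Equiv.apply_symm_apply β _
  have claim : ∀ i : Fin m, f (p.succAbove i) ≠ j := by
    intro i heq
    have h1 : π (f (p.succAbove i)) = Fin.last n := by
      rw [heq, hjdef]; exact Equiv.apply_symm_apply π _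
    have hne : β (p.succAbove i) ≠ Fin.last m := by
      intro hl
      exact Fin.succAbove_ne p i ((Equiv.eq_symm_apply β).mpr hl)
    have h2 : β (p.succAbove i) < β p := by
      rw [hβp]; exact lt_of_le_of_ne (Fin.le_last _) hne
    have h3 : π (f (p.succAbove i)) < π (f p) := (hord _ _).mpr h2
    rw [h1] at h3
    exact absurd h3 (not_lt.mpr (Fin.le_last _))
  have hex : ∀ i : Fin m, ∃ z : Fin n, j.succAbove z = f (p.succAbove i) := by
    intro i
    exact Fin.exists_succAbove_eq (claim i)
  choose g hg using hex
  have hval : ∀ i : Fin m, ((delMax π) (g i) : ℕ) = (π (f (p.succAbove i)) : ℕ) := by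
    intro i
    rw [delMax_val, ← hjdef, hg]
  refine ⟨g, ?_, ?_⟩
  · intro s t hst
    have h1 : j.succAbove (g s) < j.succAbove (g t) := by
      rw [hg, hg]
      exact hf (Fin.strictMono_succAbove p hst)
    exact (Fin.strictMono_succAbove j).lt_iff_lt.mp h1
  · intro s t
    rw [Fin.lt_def, Fin.lt_def, hval, hval]
    have h1 : (π (f (p.succAbove s)) : ℕ) < (π (f (p.succAbove t)) : ℕ) ↔
        β (p.succAbove s) < β (p.succAbove t) := by
      rw [← Fin.lt_def]; exact hord _ _
    rw [h1, Fin.lt_def, ← hext s, ← hext t]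

lemma containsB {n m : ℕ} (π : Equiv.Perm (Fin (n + 1))) (σ : Equiv.Perm (Fin m))
    (h : PContains (delMax π) σ) :
    ∃ β : Equiv.Perm (Fin (m + 1)), IsExtension β σ ∧ PContains π β := by
  obtain ⟨f, hf, hord⟩ := h
  set j := π⁻¹ (Fin.last n) with hjdef
  set g0 : Fin m → Fin (n + 1) := fun i => j.succAbove (f i) with hg0
  have hg0sm : StrictMono g0 := fun s t hst => Fin.strictMono_succAbove j (hf hst)
  set t0 : Finset (Fin (n + 1)) := Finset.image g0 Finset.univ with ht0
  have hjnot : j ∉ t0 := by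
    simp only [ht0, Finset.mem_image]
    rintro ⟨i, -, hi⟩
    exact Fin.succAbove_ne j (f i) hi
  have hcard0 : t0.card = m := by
    rw [ht0, Finset.card_image_of_injective _ hg0sm.injective, Finset.card_univ,
      Fintype.card_fin]
  set S : Finset (Fin (n + 1)) := insert j t0 with hS
  have hcard : S.card = m + 1 := by rw [hS, Finset.card_insert_of_notMem hjnot, hcard0]
  set g : Fin (m + 1) → Fin (n + 1) := fun s => S.orderEmbOfFin hcard s with hg
  have hgsm : StrictMono g := (S.orderEmbOfFin hcard).strictMono
  have hgS : ∀ s, g s ∈ S := fun s => Finset.orderEmbOfFin_mem S hcard s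
  obtain ⟨s0, hs0⟩ : ∃ s0, g s0 = j := by
    have hr := Finset.range_orderEmbOfFin S hcard
    have : j ∈ Set.range (S.orderEmbOfFin hcard) := by
      rw [hr]; exact Finset.mem_insert_self _ _
    exact this
  -- g ∘ s0.succAbove = g0
  have hcomp : ∀ i, g (s0.succAbove i) = g0 i := by
    have h1 : g0 = ⇑(t0.orderEmbOfFin hcard0) :=
      Finset.orderEmbOfFin_unique hcard0
        (fun i => Finset.mem_image_of_mem _ (Finset.mem_univ i)) hg0sm
    have h2 : (fun i => g (s0.succAbove i)) = ⇑(t0.orderEmbOfFin hcard0) := by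
      apply Finset.orderEmbOfFin_unique hcard0
      · intro i
        have hmem := hgS (s0.succAbove i)
        rw [hS, Finset.mem_insert] at hmem
        rcases hmem with hmem | hmem
        · exact absurd (hgsm.injective (hmem.trans hs0.symm)) (Fin.succAbove_ne s0 i)
        · exact hmem
      · exact fun s t hst => hgsm (Fin.strictMono_succAbove s0 hst)
    intro i
    exact (congrFun h2 i).trans (congrFun h1 i).symm
  -- pattern of π along g
  set v : Fin (m + 1) → Fin (n + 1) := fun s => π (g s) with hv
  have hvinj : Function.Injective v := fun s t hst => hgsm.injective (π.injective hst)
  set T : Finset (Fin (n + 1)) := Finset.image v Finset.univ with hT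
  have hcardT : T.card = m + 1 := by
    rw [hT, Finset.card_image_of_injective _ hvinj, Finset.card_univ, Fintype.card_fin]
  set oT := T.orderIsoOfFin hcardT with hoT
  have hvmem : ∀ s, v s ∈ T := fun s => Finset.mem_image_of_mem v (Finset.mem_univ s)
  set τ : Fin (m + 1) → Fin (m + 1) := fun s => oT.symm ⟨v s, hvmem s⟩ with hτ
  have hτord : ∀ s t, τ s < τ t ↔ v s < v t := by
    intro s t
    rw [hτ]
    simp only [OrderIso.lt_iff_lt]
    exact Subtype.mk_lt_mk
  have hτinj : Function.Injective τ := by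
    intro s t hst
    apply hvinj
    have := oT.symm.injective hst
    exact Subtype.ext_iff.mp this
  set β : Equiv.Perm (Fin (m + 1)) :=
    Equiv.ofBijective τ (Finite.injective_iff_bijective.mp hτinj) with hβ
  have hβapp : ∀ s, β s = τ s := fun s => rfl
  have hordβ : ∀ s t, π (g s) < π (g t) ↔ β s < β t := by
    intro s t
    rw [hβapp, hβapp, hτord]
  have hβs0 : β s0 = Fin.last m := by
    have hle : ∀ t, β t ≤ β s0 := by
      intro t
      apply le_of_not_gt
      intro hlt
      rw [hβapp, hβapp, hτord] at hlt
      have hvle : v t ≤ v s0 := by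
        show π (g t) ≤ π (g s0)
        rw [hs0, hjdef, Equiv.Perm.inv_def, Equiv.apply_symm_apply]
        exact Fin.le_last _
      exact absurd hlt (not_lt.mpr hvle)
    obtain ⟨t, ht⟩ := β.surjective (Fin.last m)
    exact le_antisymm (Fin.le_last _) (ht ▸ hle t)
  have hβinv : β⁻¹ (Fin.last m) = s0 := by
    rw [← hβs0]
    exact Equiv.symm_apply_apply _ _
  have hne : ∀ i : Fin m, β (s0.succAbove i) ≠ Fin.last m := by
    intro i hl
    have : s0.succAbove i = s0 := β.injective (hl.trans hβs0.symm)
    exact Fin.succAbove_ne s0 i this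
  set ρ : Fin m → Fin m := fun i => (β (s0.succAbove i)).castPred (hne i) with hρ
  have hρval : ∀ i, (ρ i : ℕ) = (β (s0.succAbove i) : ℕ) := fun i => by simp [hρ]
  have hρord : ∀ s t, ρ s < ρ t ↔ σ s < σ t := by
    intro s t
    rw [Fin.lt_def, hρval, hρval, ← Fin.lt_def, ← hordβ, hcomp, hcomp]
    have hd : ∀ i, ((delMax π) (f i) : ℕ) = (π (g0 i) : ℕ) := by
      intro i
      rw [delMax_val, ← hjdef, hg0]
    rw [show (π (g0 s) < π (g0 t)) ↔ ((delMax π) (f s) < (delMax π) (f t)) by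
      rw [Fin.lt_def, Fin.lt_def, hd, hd]]
    exact hord s t
  have hρσ : ρ = σ := perm_eq_of_order σ hρord
  refine ⟨β, ?_, ⟨g, hgsm, fun s t => hordβ s t⟩⟩
  intro i
  rw [hβinv, ← congrFun hρσ i, hρval]




lemma keyK {n m : ℕ} (π : Equiv.Perm (Fin (n + 1))) (σ : Equiv.Perm (Fin m)) :
    (∀ β : Equiv.Perm (Fin (m + 1)), IsExtension β σ → PAvoids π β) ↔
      PAvoids (delMax π) σ := by
  constructor
  · intro h hc
    obtain ⟨β, hext, hcon⟩ := containsB π σ hc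
    exact h β hext hcon
  · intro h β hext hcon
    exact h (containsA π β σ hext hcon)

lemma extendPerm_delMax {n : ℕ} (β : Equiv.Perm (Fin (n + 1))) :
    extendPerm (β⁻¹ (Fin.last n)) (delMax β) = β := by
  apply Equiv.ext
  intro x
  rcases eq_or_ne x (β⁻¹ (Fin.last n)) with rfl | hx
  · rw [extendPerm_self]
    exact (Equiv.apply_symm_apply β _).symm
  · obtain ⟨i, rfl⟩ := Fin.exists_succAbove_eq hx
    rw [extendPerm_succAbove, delMax_castSucc]

lemma keyAll {n : ℕ} (R : Set ((n : ℕ) × Equiv.Perm (Fin n))) (π : Equiv.Perm (Fin (n + 1))) :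
    (∀ σ ∈ PermExt R, PAvoids π σ.2) ↔ (∀ σ ∈ R, PAvoids (delMax π) σ.2) := by
  constructor
  · rintro h ⟨m, σ⟩ hmem
    apply (keyK π σ).mp
    intro β hext
    exact h ⟨m + 1, β⟩ ⟨m, β, σ, rfl, hmem, hext⟩
  · rintro h p hp
    obtain ⟨m, β, σ, rfl, hmem, hext⟩ := hp
    exact (keyK π σ).mpr (h ⟨m, σ⟩ hmem) β hext

noncomputable def countEquiv (R : Set ((n : ℕ) × Equiv.Perm (Fin n))) (n : ℕ) :
    {π : Equiv.Perm (Fin (n + 1)) // ∀ σ ∈ PermExt R, PAvoids π σ.2} ≃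
      Fin (n + 1) × {ρ : Equiv.Perm (Fin n) // ∀ σ ∈ R, PAvoids ρ σ.2} where
  toFun π := (π.1⁻¹ (Fin.last n), ⟨delMax π.1, (keyAll R π.1).mp π.2⟩)
  invFun x := ⟨extendPerm x.1 x.2.1, (keyAll R _).mpr (by rw [delMax_extendPerm]; exact x.2.2)⟩
  left_inv := by
    rintro ⟨π, hπ⟩
    simp only [Subtype.mk.injEq]
    exact extendPerm_delMax π
  right_inv := by
    rintro ⟨j, ρ, hρ⟩
    simp only [Prod.mk.injEq, Subtype.mk.injEq]
    exact ⟨extendPerm_inv_last j ρ, delMax_extendPerm j ρ⟩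

lemma snCard_succ (R : Set ((n : ℕ) × Equiv.Perm (Fin n))) (n : ℕ) :
    SnCard (n + 1) (PermExt R) = (n + 1) * SnCard n R := by
  unfold SnCard
  rw [Nat.card_congr (countEquiv R n), Nat.card_prod, Nat.card_eq_fintype_card,
    Fintype.card_fin]

lemma snCard_zero (R : Set ((n : ℕ) × Equiv.Perm (Fin n))) :
    SnCard 0 (PermExt R) = 1 := by
  unfold SnCard
  have hall : ∀ π : Equiv.Perm (Fin 0), ∀ σ ∈ PermExt R, PAvoids π σ.2 := by
    rintro π p ⟨m, β, α, rfl, -, -⟩ hcon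
    obtain ⟨f, -, -⟩ := hcon
    exact (f 0).elim0
  rw [Nat.card_congr (Equiv.subtypeUnivEquiv hall)]
  rw [Nat.card_eq_fintype_card, Fintype.card_perm, Fintype.card_fin]
  rfl


end Helpers

/-- For any set `R` of permutations and any `k ≥ 0`:
`|S_n(E^k(R))| = (n!/(n-k)!) ⬝ |S_{n-k}(R)|` for `n ≥ k` (here `n!/(n-k)!` is the
descending factorial), and `|S_n(E^k(R))| = n!` for `0 ≤ n < k`. -/
theorem statement14 (R : Set ((n : ℕ) × Equiv.Perm (Fin n))) (k : ℕ) :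
    (∀ n, k ≤ n → SnCard n (PermExt^[k] R) = Nat.descFactorial n k * SnCard (n - k) R) ∧
    (∀ n, n < k → SnCard n (PermExt^[k] R) = Nat.factorial n) := by
  induction k generalizing R with
  | zero =>
    refine ⟨fun n _ => by simp, fun n hn => absurd hn (Nat.not_lt_zero n)⟩
  | succ k ih =>
    constructor
    · intro n hn
      rw [Function.iterate_succ_apply]
      rw [(ih (PermExt R)).1 n (Nat.le_of_succ_le hn)]
      have hnk : n - k = (n - (k + 1)) + 1 := by omega
      rw [hnk, snCard_succ, Nat.descFactorial_succ]
      have h2 : n - (k + 1) + 1 = n - k := by omega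
      rw [h2]
      ring
    · intro n hn
      rcases Nat.lt_or_ge n k with h | h
      · rw [Function.iterate_succ_apply]
        exact (ih (PermExt R)).2 n h
      · have hnk : n = k := by omega
        subst hnk
        rw [Function.iterate_succ_apply, (ih (PermExt R)).1 n le_rfl, Nat.sub_self,
          snCard_zero, mul_one, Nat.descFactorial_self]
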